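/- Let D = (V, A) be a digraph with a vertex chain (v_i)_{0≤i≤k} and associated path decomposition (D_0, …, D_{k+1}, N_0, …, N_k, Z). Let 0 ≤ i, j ≤ k+1 with j ≥ i + 5. For every u ∈ D_i and w ∈ D_j, the arc wu belongs to A (i.e. u ∈ N⁺(w)). Furthermore, for every u ∈ N_i and w ∈ N_{j-1}, the arc wu belongs to A. -/

import Mathlib

/-- `x` and `y` form a non-edge: distinct vertices with no arc between them
in either direction. -/
def NonEdge {V : Type*} (A : V → V → Prop) (x y : V) : Prop :=
  x ≠ y ∧ ¬ A x y ∧ ¬ A y x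

/-- One step of a vertex chain: a forward arc or a non-edge. -/
def ChainStep {V : Type*} (A : V → V → Prop) (x y : V) : Prop :=
  A x y ∨ NonEdge A x y

/-- `(v i)_{0 ≤ i ≤ k}` is a vertex chain of the digraph `A`: consecutive vertices are
joined by a forward arc or a non-edge, and no such sequence from `v 0` to `v k` is
shorter. -/
def IsVertexChain {V : Type*} (A : V → V → Prop) (k : ℕ) (v : ℕ → V) : Prop :=
  (∀ i < k, ChainStep A (v i) (v (i + 1))) ∧
  ∀ (m : ℕ) (w : ℕ → V), w 0 = v 0 → w m = v k →
    (∀ i < m, ChainStep A (w i) (w (i + 1))) → k ≤ m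

/-- Out-neighborhood `N⁺(x)`. -/
def Nplus {V : Type*} (A : V → V → Prop) (x : V) : Set V := {u | A x u}

/-- In-neighborhood `N⁻(x)`. -/
def Nminus {V : Type*} (A : V → V → Prop) (x : V) : Set V := {u | A u x}

/-- Non-neighborhood `N^o(x)`. -/
def Nzero {V : Type*} (A : V → V → Prop) (x : V) : Set V :=
  {u | u ≠ x ∧ ¬ A x u ∧ ¬ A u x}

/-- For an arc or non-arc `e = uv`, `N(e) = N⁺(v) ∩ N⁻(u)`. -/
def NArc {V : Type*} (A : V → V → Prop) (u v : V) : Set V :=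
  {w | A v w ∧ A w u}

/-- `(DD, NN, Z)` is the path decomposition associated with the vertex chain
`(v i)_{0 ≤ i ≤ k}`:
`D_i = N(e_i) \ ∪_{1 ≤ j < i} D_j` for `1 ≤ i ≤ k` (where `e_i` goes from `v (i-1)` to
`v i`); `N_i = N^o(v_i) \ (∪_{1 ≤ j ≤ k} D_j ∪ ∪_{j < i} N_j)` for `0 ≤ i ≤ k`;
`D_0 = N⁺(v_0) \ (∪_{1 ≤ j ≤ k} D_j ∪ ∪_{0 ≤ j ≤ k} N_j)`;
`D_{k+1} = N⁻(v_k) \ ∪_{0 ≤ j ≤ k} (D_j ∪ N_j)`;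
`Z = V \ (∪_{0 ≤ j ≤ k} (D_j ∪ N_j) ∪ D_{k+1})`. -/
def IsPathDecomp {V : Type*} (A : V → V → Prop) (k : ℕ) (v : ℕ → V)
    (DD NN : ℕ → Set V) (Z : Set V) : Prop :=
  (∀ i, 1 ≤ i → i ≤ k →
      DD i = NArc A (v (i - 1)) (v i) \ ⋃ j ∈ Finset.Ico 1 i, DD j) ∧
  (∀ i ≤ k, NN i =
      Nzero A (v i) \ ((⋃ j ∈ Finset.Icc 1 k, DD j) ∪ ⋃ j ∈ Finset.Ico 0 i, NN j)) ∧
  (DD 0 = Nplus A (v 0) \ ((⋃ j ∈ Finset.Icc 1 k, DD j) ∪ ⋃ j ∈ Finset.Icc 0 k, NN j)) ∧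
  (DD (k + 1) = Nminus A (v k) \ ⋃ j ∈ Finset.Icc 0 k, (DD j ∪ NN j)) ∧
  (Z = Set.univ \ ((⋃ j ∈ Finset.Icc 0 k, (DD j ∪ NN j)) ∪ DD (k + 1)))

theorem stmt7_key {V : Type*} (A : V → V → Prop)
    (k : ℕ) (v : ℕ → V) (hchain : IsVertexChain A k v) (i j : ℕ)
    (hik : i ≤ k) (hj : j ≤ k + 1) (hij : i + 5 ≤ j) (u x : V)
    (h1 : ChainStep A (v i) u) (h2 : ChainStep A u x)
    (h3 : ChainStep A x (v (j - 1))) : False := by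
  set m := k + i + 4 - j with hm
  set w : ℕ → V := fun t =>
    if t ≤ i then v t else if t = i + 1 then u else if t = i + 2 then x
    else v (t + j - i - 4) with hwdef
  have hw0 : w 0 = v 0 := by simp [hwdef]
  have hwm : w m = v k := by
    have h1' : ¬ m ≤ i := by omega
    have h2' : m ≠ i + 1 := by omega
    have h3' : m ≠ i + 2 := by omega
    simp only [hwdef, if_neg h1', if_neg h2', if_neg h3']
    congr 1
    omega
  have hsteps : ∀ t < m, ChainStep A (w t) (w (t + 1)) := by
    intro t ht
    rcases Nat.lt_or_ge t i with h | h
    · have e1 : w t = v t := if_pos (Nat.le_of_lt h)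
      have e2 : w (t + 1) = v (t + 1) := if_pos h
      rw [e1, e2]
      exact hchain.1 t (by omega)
    rcases Nat.eq_or_lt_of_le h with h' | h'
    · have e1 : w t = v t := if_pos (by omega)
      have e2 : w (t + 1) = u := by
        simp only [hwdef]
        rw [if_neg (by omega), if_pos (by omega)]
      rw [e1, e2, ← h']; exact h1
    rcases Nat.eq_or_lt_of_le h' with h'' | h''
    · have e1 : w t = u := by
        simp only [hwdef]; rw [if_neg (by omega), if_pos (by omega)]
      have e2 : w (t + 1) = x := by
        simp only [hwdef]; rw [if_neg (by omega), if_neg (by omega), if_pos (by omega)]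
      rw [e1, e2]; exact h2
    rcases Nat.eq_or_lt_of_le h'' with h3x | h3x
    · have e1 : w t = x := by
        simp only [hwdef]; rw [if_neg (by omega), if_neg (by omega), if_pos (by omega)]
      have e2 : w (t + 1) = v (j - 1) := by
        simp only [hwdef]
        rw [if_neg (by omega), if_neg (by omega), if_neg (by omega)]
        congr 1
        omega
      rw [e1, e2]; exact h3
    · have e1 : w t = v (t + j - i - 4) := by
        simp only [hwdef]; rw [if_neg (by omega), if_neg (by omega), if_neg (by omega)]
      have e2 : w (t + 1) = v (t + j - i - 4 + 1) := by
        simp only [hwdef]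
        rw [if_neg (by omega), if_neg (by omega), if_neg (by omega)]
        congr 1
        omega
      rw [e1, e2]
      exact hchain.1 _ (by omega)
  have := hchain.2 m w hw0 hwm hsteps
  omega

/-- Long arcs go backwards: for `j ≥ i + 5`, every arc between `D_i` and `D_j` goes
from `D_j` to `D_i`, and every arc between `N_i` and `N_{j-1}` goes from `N_{j-1}` to
`N_i`. -/
theorem stmt7 {V : Type*} [Fintype V] (A : V → V → Prop) (hirr : ∀ x, ¬ A x x)
    (k : ℕ) (v : ℕ → V) (hchain : IsVertexChain A k v)
    (DD NN : ℕ → Set V) (Z : Set V) (hdec : IsPathDecomp A k v DD NN Z)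
    (i j : ℕ) (hi : i ≤ k + 1) (hj : j ≤ k + 1) (hij : i + 5 ≤ j) :
    (∀ u ∈ DD i, ∀ w ∈ DD j, A w u) ∧
    (∀ u ∈ NN i, ∀ w ∈ NN (j - 1), A w u) := by
  obtain ⟨hD, hN, hD0, hDk1, hZ⟩ := hdec
  have hik : i ≤ k := by omega
  have hj1 : 1 ≤ j := by omega
  constructor
  · intro u hu w hw
    by_contra hwu
    -- arc from v i to u
    have harc1 : A (v i) u := by
      rcases Nat.eq_zero_or_pos i with h0 | h0
      · subst h0
        rw [hD0] at hu
        exact hu.1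
      · rw [hD i h0 hik] at hu
        exact hu.1.1
    -- arc from w to v (j-1)
    have harc3 : A w (v (j - 1)) := by
      rcases Nat.lt_or_ge j (k + 1) with hjk | hjk
      · rw [hD j hj1 (by omega)] at hw
        exact hw.1.2
      · have hjeq : j = k + 1 := by omega
        subst hjeq
        rw [hDk1] at hw
        have hw1 : A w (v k) := hw.1
        simpa using hw1
    -- u ≠ w
    have hne : u ≠ w := by
      intro heq
      subst heq
      rcases Nat.lt_or_ge j (k + 1) with hjk | hjk
      · rcases Nat.eq_zero_or_pos i with h0 | h0
        · subst h0
          rw [hD0] at hu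
          refine hu.2 (Or.inl ?_)
          exact Set.mem_biUnion (Finset.mem_Icc.mpr ⟨hj1, by omega⟩) hw
        · rw [hD j hj1 (by omega)] at hw
          exact hw.2 (Set.mem_biUnion (Finset.mem_Ico.mpr ⟨h0, by omega⟩) hu)
      · have hjeq : j = k + 1 := by omega
        subst hjeq
        rw [hDk1] at hw
        exact hw.2 (Set.mem_biUnion (Finset.mem_Icc.mpr ⟨Nat.zero_le _, hik⟩) (Or.inl hu))
    have h2 : ChainStep A u w := by
      by_cases h : A u w
      · exact Or.inl h
      · exact Or.inr ⟨hne, h, hwu⟩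
    exact stmt7_key A k v hchain i j hik hj hij u w (Or.inl harc1) h2 (Or.inl harc3)
  · intro u hu w hw
    by_contra hwu
    have hu0 := hu
    rw [hN i hik] at hu
    rw [hN (j - 1) (by omega)] at hw
    have h1 : ChainStep A (v i) u := Or.inr ⟨(hu.1.1).symm, hu.1.2.1, hu.1.2.2⟩
    have h3 : ChainStep A w (v (j - 1)) := Or.inr ⟨hw.1.1, hw.1.2.2, hw.1.2.1⟩
    have hne : u ≠ w := by
      intro heq
      subst heq
      refine hw.2 (Or.inr ?_)
      exact Set.mem_biUnion (Finset.mem_Ico.mpr ⟨Nat.zero_le _, by omega⟩) hu0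
    have h2 : ChainStep A u w := by
      by_cases h : A u w
      · exact Or.inl h
      · exact Or.inr ⟨hne, h, hwu⟩
    exact stmt7_key A k v hchain i j hik hj hij u w h1 h2 h3
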